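/- For any finite graph H without isolated vertices and every integer k ≥ 3, hom(C_k, H)^{1/k} ≤ max{hom(C_3, H)^{1/3}, hom(C_4, H)^{1/4}}. -/

import Mathlib

open Finset

/-- Number of graph homomorphisms from the (loopless or looped) graph given by
relation `G` on `U` to the graph given by relation `H` on `V`. -/
def HomCount {U V : Type*} [Fintype U] [DecidableEq U] [Fintype V] [DecidableEq V]
    (G : U → U → Prop) [DecidableRel G] (H : V → V → Prop) [DecidableRel H] : ℕ :=
  Fintype.card {f : U → V // ∀ a b, G a b → H (f a) (f b)}

/-- Degree of a vertex in a graph with loops (a loop counts once). -/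
def hdeg {V : Type*} [Fintype V] (H : V → V → Prop) [DecidableRel H] (v : V) : ℕ :=
  (Finset.univ.filter (H v)).card

/-- Adjacency matrix (over ℝ) of the graph with loops given by `H`. -/
def adjMat {V : Type*} [Fintype V] (H : V → V → Prop) [DecidableRel H] : Matrix V V ℝ :=
  fun i j => if H i j then 1 else 0

/-- Adjacency relation of the cycle `C_k` on vertex set `Fin k` (for `k ≥ 3`). -/
def cycAdj (k : ℕ) (i j : Fin k) : Prop :=
  (i.val + 1) % k = j.val ∨ (j.val + 1) % k = i.val

instance (k : ℕ) : DecidableRel (cycAdj k) := fun i j => by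
  unfold cycAdj; infer_instance

/-- Adjacency relation of the path `P_k` on vertex set `Fin k`. -/
def pathAdj (k : ℕ) (i j : Fin k) : Prop :=
  i.val + 1 = j.val ∨ j.val + 1 = i.val

instance (k : ℕ) : DecidableRel (pathAdj k) := fun i j => by
  unfold pathAdj; infer_instance

/-- Adjacency relation of the star `K_{1,x-1}` on `Fin x`, with center `0`. -/
def starAdj (x : ℕ) (i j : Fin x) : Prop :=
  (i.val = 0 ∧ j.val ≠ 0) ∨ (j.val = 0 ∧ i.val ≠ 0)

instance (x : ℕ) : DecidableRel (starAdj x) := fun i j => by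
  unfold starAdj; infer_instance


open Matrix

section Aux
variable {V : Type*} [Fintype V] [DecidableEq V]


lemma pow_apply_walks (A : Matrix V V ℝ) :
    ∀ (k : ℕ) (u v : V), (A ^ k) u v =
      ∑ f : (Fin (k+1) → V),
        if f 0 = u ∧ f (Fin.last k) = v then ∏ i : Fin k, A (f i.castSucc) (f i.succ) else 0 := by
  intro k
  induction k with
  | zero =>
    intro u v
    rw [pow_zero, ← (Equiv.funUnique (Fin 1) V).symm.sum_comp]
    simp only [show ∀ x : V, ((Equiv.funUnique (Fin 1) V).symm x : Fin 1 → V) = fun _ => x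
      from fun _ => rfl]
    simp only [Fin.prod_univ_zero]
    by_cases h : u = v
    · subst h
      simp [Matrix.one_apply, ite_and, Finset.sum_ite_eq']
    · rw [Matrix.one_apply_ne h, Finset.sum_eq_zero]
      intro x _
      have hx : ¬(x = u ∧ x = v) := by rintro ⟨rfl, rfl⟩; exact h rfl
      simp [hx]
  | succ k ih =>
    intro u v
    rw [pow_succ', Matrix.mul_apply]
    rw [← (Fin.consEquiv (fun _ : Fin (k+2) => V)).sum_comp, Fintype.sum_prod_type]
    have hconscomp : ∀ (w : V) (g : Fin (k+1) → V),
        ((Fin.consEquiv (fun _ : Fin (k+2) => V)) (w, g) : Fin (k+2) → V) = Fin.cons w g :=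
      fun _ _ => rfl
    have hzero : ∀ (w : V) (g : Fin (k+1) → V),
        (Fin.cons w g : Fin (k+2) → V) 0 = w := fun _ _ => rfl
    have hlast : ∀ (w : V) (g : Fin (k+1) → V),
        (Fin.cons w g : Fin (k+2) → V) (Fin.last (k+1)) = g (Fin.last k) := by
      intro w g
      rw [show Fin.last (k+1) = (Fin.last k).succ from rfl, Fin.cons_succ]
    have hprod : ∀ (w : V) (g : Fin (k+1) → V),
        (∏ i : Fin (k+1), A ((Fin.cons w g : Fin (k+2) → V) i.castSucc)
            ((Fin.cons w g : Fin (k+2) → V) i.succ)) =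
          A w (g 0) * ∏ i : Fin k, A (g i.castSucc) (g i.succ) := by
      intro w g
      rw [Fin.prod_univ_succ]
      congr 1
    simp only [hconscomp, hzero, hlast, hprod]
    have mid : ∀ w : V, A u w * (A ^ k) w v =
        ∑ g : Fin (k+1) → V,
          if g 0 = w ∧ g (Fin.last k) = v
          then A u w * ∏ i : Fin k, A (g i.castSucc) (g i.succ) else 0 := by
      intro w
      rw [ih, Finset.mul_sum]
      exact Finset.sum_congr rfl fun g _ => by rw [mul_ite, mul_zero]
    simp only [mid]
    rw [Finset.sum_comm]
    conv_rhs => rw [Finset.sum_comm]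
    refine Finset.sum_congr rfl fun g _ => ?_
    simp only [ite_and]
    rw [Finset.sum_ite_eq, Finset.sum_ite_eq']
    simp

lemma snoc_succ_eq {m : ℕ} (g : Fin (m+1) → V) (i : Fin (m+1)) :
    (Fin.snoc g (g 0) : Fin (m+2) → V) i.succ = g (i + 1) := by
  rcases eq_or_ne i (Fin.last m) with rfl | h
  · rw [show (Fin.last m).succ = Fin.last (m+1) from rfl, Fin.snoc_last, Fin.last_add_one]
  · have hlt : i.val < m := lt_of_le_of_ne (Nat.lt_succ_iff.mp i.isLt) (fun hc => h (Fin.ext hc))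
    have hieq : i.succ = (i + 1).castSucc := by
      apply Fin.ext
      rw [Fin.val_succ, Fin.coe_castSucc, Fin.val_add_one_of_lt (by rwa [Fin.lt_def])]
    rw [hieq, Fin.snoc_castSucc]

lemma trace_pow_walks (A : Matrix V V ℝ) (m : ℕ) :
    (A ^ (m+1)).trace = ∑ g : Fin (m+1) → V, ∏ i : Fin (m+1), A (g i) (g (i + 1)) := by
  rw [Matrix.trace]
  simp only [Matrix.diag_apply, pow_apply_walks A (m+1)]
  rw [Finset.sum_comm]
  have step1 : ∀ f : Fin (m+2) → V,
      (∑ u : V, if f 0 = u ∧ f (Fin.last (m+1)) = u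
        then ∏ i : Fin (m+1), A (f i.castSucc) (f i.succ) else 0) =
      (if f (Fin.last (m+1)) = f 0 then ∏ i : Fin (m+1), A (f i.castSucc) (f i.succ) else 0) := by
    intro f
    simp only [ite_and]
    rw [Finset.sum_ite_eq]
    simp [eq_comm]
  simp only [step1]
  rw [← (Fin.snocEquiv (fun _ : Fin (m+2) => V)).sum_comp, Fintype.sum_prod_type]
  have hsnoccomp : ∀ (x : V) (g : Fin (m+1) → V),
      ((Fin.snocEquiv (fun _ : Fin (m+2) => V)) (x, g) : Fin (m+2) → V) = Fin.snoc g x :=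
    fun _ _ => rfl
  simp only [hsnoccomp]
  have hzero : ∀ (x : V) (g : Fin (m+1) → V), (Fin.snoc g x : Fin (m+2) → V) 0 = g 0 := by
    intro x g
    rw [show (0 : Fin (m+2)) = (0 : Fin (m+1)).castSucc from rfl, Fin.snoc_castSucc]
  have hlast : ∀ (x : V) (g : Fin (m+1) → V),
      (Fin.snoc g x : Fin (m+2) → V) (Fin.last (m+1)) = x := fun x g => Fin.snoc_last _ _
  rw [Finset.sum_comm]
  refine Finset.sum_congr rfl fun g _ => ?_
  rw [show (∑ x : V, if (Fin.snoc g x : Fin (m+2) → V) (Fin.last (m+1)) =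
        (Fin.snoc g x : Fin (m+2) → V) 0
      then ∏ i : Fin (m+1), A ((Fin.snoc g x : Fin (m+2) → V) i.castSucc)
        ((Fin.snoc g x : Fin (m+2) → V) i.succ) else 0) =
    ∑ x : V, if x = g 0 then ∏ i : Fin (m+1), A ((Fin.snoc g x : Fin (m+2) → V) i.castSucc)
        ((Fin.snoc g x : Fin (m+2) → V) i.succ) else 0 from
    Finset.sum_congr rfl fun x _ => by rw [hzero, hlast]]
  rw [Finset.sum_ite_eq']
  simp only [Finset.mem_univ, if_true]
  refine Finset.prod_congr rfl fun i _ => ?_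
  rw [Fin.snoc_castSucc, snoc_succ_eq]

lemma fin_val_add_one {m : ℕ} (a : Fin (m+1)) :
    ((a + 1 : Fin (m+1))).val = (a.val + 1) % (m+1) := by
  rw [Fin.val_add, Fin.val_one', Nat.add_mod, Nat.mod_mod_of_dvd _ dvd_rfl, ← Nat.add_mod]

lemma homCount_cyc_eq_trace (H : V → V → Prop) [DecidableRel H]
    (hsym : ∀ a b, H a b → H b a) (m : ℕ) :
    (HomCount (cycAdj (m+1)) H : ℝ) = ((adjMat H) ^ (m+1)).trace := by
  rw [trace_pow_walks]
  have hpred : ∀ g : Fin (m+1) → V,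
      (∀ a b, cycAdj (m+1) a b → H (g a) (g b)) ↔ (∀ i, H (g i) (g (i + 1))) := by
    intro g
    constructor
    · intro h i
      exact h i (i+1) (Or.inl (fin_val_add_one i).symm)
    · intro h a b hab
      rcases hab with hab | hab
      · have : b = a + 1 := by
          apply Fin.ext
          rw [fin_val_add_one, hab]
        rw [this]; exact h a
      · have : a = b + 1 := by
          apply Fin.ext
          rw [fin_val_add_one, hab]
        rw [this] at *
        exact hsym _ _ (h b)
  have : ∀ g : Fin (m+1) → V,
      (∏ i : Fin (m+1), adjMat H (g i) (g (i+1))) =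
        if ∀ i, H (g i) (g (i + 1)) then (1:ℝ) else 0 := by
    intro g
    rw [show (∏ i : Fin (m+1), adjMat H (g i) (g (i+1))) =
        ∏ i : Fin (m+1), if H (g i) (g (i+1)) then (1:ℝ) else 0 from rfl]
    rw [Fintype.prod_boole]
    by_cases hP : ∀ i, H (g i) (g (i+1)) <;> simp [hP]
  simp only [this]
  rw [Finset.sum_boole]
  rw [HomCount, Fintype.card_subtype]
  norm_num
  congr 1
  ext g
  simp only [Finset.mem_filter, Finset.mem_univ, true_and]
  exact hpred g

lemma trace_pow_eq_sum_eigenvalues (A : Matrix V V ℝ) (hA : A.IsHermitian) (k : ℕ) :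
    (A ^ k).trace = ∑ i, (hA.eigenvalues i) ^ k := by
  set U : Matrix V V ℝ := (Matrix.IsHermitian.eigenvectorUnitary hA : Matrix V V ℝ) with hU
  have hU1 : star U * U = 1 := (Matrix.mem_unitaryGroup_iff').mp
    (Matrix.IsHermitian.eigenvectorUnitary hA).2
  have hU2 : U * star U = 1 := (Matrix.mem_unitaryGroup_iff).mp
    (Matrix.IsHermitian.eigenvectorUnitary hA).2
  set D : Matrix V V ℝ := Matrix.diagonal (RCLike.ofReal ∘ hA.eigenvalues) with hD
  have hspec : A = U * D * star U := hA.spectral_theorem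
  have hpow : ∀ n : ℕ, A ^ n = U * D ^ n * star U := by
    intro n
    induction n with
    | zero => rw [pow_zero, pow_zero, mul_one, hU2]
    | succ n ihn =>
      calc A ^ (n+1) = A ^ n * A := pow_succ A n
        _ = (U * D ^ n * star U) * (U * D * star U) := by rw [ihn, ← hspec]
        _ = U * D ^ n * ((star U * U) * (D * star U)) := by simp only [mul_assoc]
        _ = U * D ^ (n+1) * star U := by
            rw [hU1, one_mul, pow_succ]
            simp only [mul_assoc]
  rw [hpow k, Matrix.trace_mul_cycle, hU1, one_mul, hD, Matrix.diagonal_pow,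
    Matrix.trace_diagonal]
  simp

lemma sum_pow_le_rpow {W : Type*} [Fintype W] (lam : W → ℝ) (n : ℕ) (hn : 4 ≤ n) :
    ∑ i, lam i ^ n ≤ (∑ i, lam i ^ 4) ^ ((n : ℝ)/4) := by
  set t4 := ∑ i, lam i ^ 4 with ht4def
  have ht4 : 0 ≤ t4 := Finset.sum_nonneg fun i _ => by positivity
  have habs : ∀ i, |lam i| ≤ t4 ^ ((4:ℝ)⁻¹) := by
    intro i
    have h1 : |lam i| ^ (4:ℕ) ≤ t4 := by
      rw [← abs_pow, abs_of_nonneg (by positivity : (0:ℝ) ≤ lam i ^ 4)]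
      exact Finset.single_le_sum (f := fun j => lam j ^ 4) (fun j _ => by positivity) (Finset.mem_univ i)
    calc |lam i| = (|lam i| ^ (4:ℕ)) ^ ((4:ℝ)⁻¹) := by
          rw [← Real.rpow_natCast (|lam i|) 4, ← Real.rpow_mul (abs_nonneg _)]
          norm_num
      _ ≤ t4 ^ ((4:ℝ)⁻¹) := Real.rpow_le_rpow (by positivity) h1 (by norm_num)
  calc ∑ i, lam i ^ n ≤ ∑ i, (t4 ^ ((4:ℝ)⁻¹)) ^ (n - 4 : ℕ) * lam i ^ 4 := by
        apply Finset.sum_le_sum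
        intro i _
        calc lam i ^ n ≤ |lam i| ^ n := by rw [← abs_pow]; exact le_abs_self _
          _ = |lam i| ^ (n-4 : ℕ) * |lam i| ^ (4:ℕ) := by rw [← pow_add]; congr 1; omega
          _ ≤ (t4 ^ ((4:ℝ)⁻¹)) ^ (n-4 : ℕ) * lam i ^ 4 := by
              rw [show |lam i| ^ (4:ℕ) = lam i ^ 4 by
                rw [← abs_pow, abs_of_nonneg (by positivity : (0:ℝ) ≤ lam i ^ 4)]]
              exact mul_le_mul_of_nonneg_right
                (pow_le_pow_left₀ (abs_nonneg _) (habs i) _) (by positivity)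
    _ = (t4 ^ ((4:ℝ)⁻¹)) ^ (n-4 : ℕ) * t4 := by rw [← Finset.mul_sum]
    _ = t4 ^ ((n:ℝ)/4) := by
        have hexp : (4:ℝ)⁻¹ * ((n - 4 : ℕ) : ℝ) + 1 = (n:ℝ)/4 := by
          rw [Nat.cast_sub hn]
          field_simp
          push_cast; ring
        have hne : (4:ℝ)⁻¹ * ((n - 4 : ℕ) : ℝ) + 1 ≠ 0 := by positivity
        rw [← Real.rpow_natCast (t4 ^ ((4:ℝ)⁻¹)) (n-4), ← Real.rpow_mul ht4,
          ← hexp, Real.rpow_add' ht4 hne, Real.rpow_one]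

end Aux

/-- for every `k ≥ 3`,
`hom(C_k,H)^{1/k} ≤ max{hom(C_3,H)^{1/3}, hom(C_4,H)^{1/4}}`. -/
theorem cycle_hom_max_three_four {V : Type*} [Fintype V] [DecidableEq V]
    (H : V → V → Prop) [DecidableRel H] (hsym : ∀ a b, H a b → H b a)
    (hiso : ∀ v, ∃ w, H v w)
    (k : ℕ) (hk : 3 ≤ k) :
    (HomCount (cycAdj k) H : ℝ) ^ ((k : ℝ)⁻¹) ≤
      max ((HomCount (cycAdj 3) H : ℝ) ^ ((3 : ℝ)⁻¹))
        ((HomCount (cycAdj 4) H : ℝ) ^ ((4 : ℝ)⁻¹)) := by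
  rcases eq_or_lt_of_le hk with h3 | h4
  · rw [← h3]
    exact le_max_left _ _
  · have hk4 : 4 ≤ k := h4
    have hA : (adjMat H).IsHermitian := by
      show (adjMat H)ᴴ = adjMat H
      ext i j
      simp only [Matrix.conjTranspose_apply, adjMat, star_trivial]
      by_cases h1 : H i j <;> by_cases h2 : H j i <;>
        simp [h1, h2] <;> first | exact h1 (hsym j i h2) | exact h2 (hsym i j h1)
    set lam := hA.eigenvalues with hlam
    have e_gen : ∀ n : ℕ, 1 ≤ n → (HomCount (cycAdj n) H : ℝ) = ∑ i, lam i ^ n := by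
      intro n hn
      obtain ⟨m, rfl⟩ : ∃ m, n = m + 1 := ⟨n - 1, by omega⟩
      rw [homCount_cyc_eq_trace H hsym m, trace_pow_eq_sum_eigenvalues _ hA]
    have e_k := e_gen k (by omega)
    have e_4 := e_gen 4 (by omega)
    refine le_max_of_le_right ?_
    rw [e_k, e_4]
    have ht4 : 0 ≤ ∑ i, lam i ^ 4 := Finset.sum_nonneg fun i _ => by positivity
    have hsk : 0 ≤ ∑ i, lam i ^ k := by
      rw [← e_k]; exact Nat.cast_nonneg _
    have hk0 : (k:ℝ) ≠ 0 := Nat.cast_ne_zero.mpr (by omega)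
    calc (∑ i, lam i ^ k) ^ ((k:ℝ)⁻¹)
        ≤ ((∑ i, lam i ^ 4) ^ ((k:ℝ)/4)) ^ ((k:ℝ)⁻¹) :=
          Real.rpow_le_rpow hsk (sum_pow_le_rpow lam k hk4) (by positivity)
      _ = (∑ i, lam i ^ 4) ^ ((4:ℝ)⁻¹) := by
          rw [← Real.rpow_mul ht4]
          congr 1
          rw [div_mul_eq_mul_div, mul_inv_cancel₀ hk0, one_div]
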